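/- arXiv:1208.3094 — 5 statements merged into one kernel-verified Lean document; each statement's English description precedes it below -/
import Mathlib

section
/- Let A ≠ 0 be a non-negative operator in the Krein space K, let K be indefinite, and assume that ker A is indefinite. Then W(A) ∪ {0} = ℝ. -/
open Set Filter Topology

variable {K : Type*} [NormedAddCommGroup K] [InnerProductSpace ℂ K] [CompleteSpace K]

/-- The real part of the Krein space inner product `[x, y] = ⟪J x, y⟫`. -/
noncomputable def kreinRe (J : K →L[ℂ] K) (x y : K) : ℝ :=
  (@inner ℂ K _ (J x) y).re

/-- `J` is a fundamental symmetry: selfadjoint and an involution. -/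
def IsFundamentalSymmetry (J : K →L[ℂ] K) : Prop :=
  IsSelfAdjoint J ∧ J ∘L J = 1

/-- `A` is a non-negative operator in the Krein space `(K, [·,·])` induced by `J`:
`J ∘ A` is selfadjoint on the Hilbert space `K` and `[A x, x] ≥ 0` for all `x`. -/
def IsKreinNonneg (J A : K →L[ℂ] K) : Prop :=
  IsSelfAdjoint (J ∘L A) ∧ ∀ x : K, 0 ≤ kreinRe J (A x) x

/-- The Krein space numerical range `W(A)`. -/
noncomputable def kreinW (J A : K →L[ℂ] K) : Set ℝ :=
  {r : ℝ | ∃ x : K, kreinRe J x x ≠ 0 ∧ r = kreinRe J (A x) x / kreinRe J x x}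

/-- The Krein space co-numerical range `W_co(A)`. -/
noncomputable def kreinWco (J A : K →L[ℂ] K) : Set ℝ :=
  {r : ℝ | ∃ x : K, kreinRe J (A x) x ≠ 0 ∧
    r = kreinRe J (A x) (A x) / kreinRe J (A x) x}

/-- The real spectrum `σℝ(A)` of `A`. -/
def sigmaR (A : K →L[ℂ] K) : Set ℝ := {t : ℝ | (t : ℂ) ∈ spectrum ℂ A}

/-- The Krein space `(K, [·,·])` is indefinite. -/
def KreinIndefinite (J : K →L[ℂ] K) : Prop :=
  (∃ x : K, 0 < kreinRe J x x) ∧ ∃ y : K, kreinRe J y y < 0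

omit [CompleteSpace K] in
lemma expand_re (S : K →L[ℂ] K)
    (hS : ∀ x y : K, @inner ℂ K _ (S x) y = @inner ℂ K _ x (S y)) (x y : K) (c : ℂ) :
    (@inner ℂ K _ (S (x + c • y)) (x + c • y)).re
      = (@inner ℂ K _ (S x) x).re + 2 * (c * @inner ℂ K _ (S x) y).re
        + Complex.normSq c * (@inner ℂ K _ (S y) y).re := by
  have h1 : @inner ℂ K _ (S y) x = starRingEnd ℂ (@inner ℂ K _ (S x) y) := by
    rw [hS y x, inner_conj_symm]
  have h0 : @inner ℂ K _ y (S x) = starRingEnd ℂ (@inner ℂ K _ (S x) y) :=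
    (inner_conj_symm y (S x)).symm
  simp only [map_add, map_smul, inner_add_left, inner_add_right, inner_smul_left,
    inner_smul_right, h1, h0]
  simp only [Complex.add_re, Complex.add_im, Complex.mul_re, Complex.mul_im,
    Complex.conj_re, Complex.conj_im, Complex.normSq_apply]
  ring

/-- Theorem (ii): if `ker A` is indefinite, then `W(A) ∪ {0} = ℝ`. -/
theorem stmt_3 (J A : K →L[ℂ] K) (hJ : IsFundamentalSymmetry J)
    (hA : IsKreinNonneg J A) (hA0 : A ≠ 0) (hind : KreinIndefinite J)
    (hkerind : (∃ u : K, A u = 0 ∧ u ≠ 0 ∧ kreinRe J u u ≤ 0) ∧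
      (∃ v : K, A v = 0 ∧ v ≠ 0 ∧ 0 ≤ kreinRe J v v)) :
    kreinW J A ∪ {0} = Set.univ := by
  classical
  obtain ⟨hJsa, hJJ⟩ := hJ
  obtain ⟨hTsa, hpos⟩ := hA
  set T := J ∘L A with hTdef
  have hJJ' : ∀ x : K, J (J x) = x := fun x => by
    have := congrArg (fun f : K →L[ℂ] K => f x) hJJ; simpa using this
  have hJsym : ∀ x y : K, @inner ℂ K _ (J x) y = @inner ℂ K _ x (J y) :=
    fun x y => hJsa.isSymmetric x y
  have hTsym : ∀ x y : K, @inner ℂ K _ (T x) y = @inner ℂ K _ x (T y) :=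
    fun x y => hTsa.isSymmetric x y
  have hTA : ∀ x : K, T x = J (A x) := fun x => rfl
  have hkre : ∀ x : K, kreinRe J (A x) x = (@inner ℂ K _ (T x) x).re := fun x => rfl
  have hpos' : ∀ x : K, 0 ≤ (@inner ℂ K _ (T x) x).re := fun x => (hkre x) ▸ hpos x
  -- Step 1 : a neutral nonzero kernel vector
  obtain ⟨⟨u, hu0, hune, huneg⟩, ⟨v, hv0, hvne, hvpos⟩⟩ := hkerind
  have hW : ∃ w : K, w ≠ 0 ∧ A w = 0 ∧ (@inner ℂ K _ (J w) w).re = 0 := by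
    rcases eq_or_lt_of_le huneg with h | h
    · exact ⟨u, hune, hu0, h⟩
    rcases eq_or_lt_of_le hvpos with h' | h'
    · exact ⟨v, hvne, hv0, h'.symm⟩
    · have hα : (@inner ℂ K _ (J u) u).re = kreinRe J u u := rfl
      have hβ : (@inner ℂ K _ (J v) v).re = kreinRe J v v := rfl
      set α := kreinRe J u u with hαd
      set β := kreinRe J v v with hβd
      set e := (@inner ℂ K _ (J u) v).re with he
      have hD : (0:ℝ) ≤ e ^ 2 - α * β := by nlinarith
      set q := Real.sqrt (e ^ 2 - α * β) with hq
      have hq2 : q ^ 2 = e ^ 2 - α * β := Real.sq_sqrt hD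
      set s := (q - e) / β with hs
      have hβ0 : β ≠ 0 := ne_of_gt h'
      have hroot : α + 2 * (s * e) + s ^ 2 * β = 0 := by
        have hsval : β * s = q - e := by rw [hs]; field_simp
        have hmul : (α + 2 * (s * e) + s ^ 2 * β) * β = 0 := by
          have expand : (α + 2 * (s * e) + s ^ 2 * β) * β
              = α * β + 2 * e * (β * s) + (β * s) ^ 2 := by ring
          rw [expand, hsval]; nlinarith [hq2]
        exact (mul_eq_zero.mp hmul).resolve_right hβ0
      refine ⟨u + (s : ℂ) • v, ?_, ?_, ?_⟩
      · intro hzero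
        have hu' : u = -((s : ℂ) • v) := eq_neg_of_add_eq_zero_left hzero
        have h5 : (@inner ℂ K _ (J u) u).re
            = Complex.normSq (s : ℂ) * (@inner ℂ K _ (J v) v).re := by
          rw [hu', map_neg, map_smul, inner_neg_neg, inner_smul_left, inner_smul_right,
            ← mul_assoc, mul_comm (starRingEnd ℂ ((s:ℝ):ℂ)) ((s:ℝ):ℂ), Complex.mul_conj,
            Complex.re_ofReal_mul]
        rw [hα, hβ] at h5
        nlinarith [Complex.normSq_nonneg ((s:ℝ):ℂ)]
      · simp [map_add, map_smul, hu0, hv0]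
      · rw [expand_re J hJsym u v (s : ℂ)]
        have h1 : (((s:ℝ):ℂ) * @inner ℂ K _ (J u) v).re = s * e := by
          rw [he, Complex.re_ofReal_mul]
        have h2 : Complex.normSq ((s:ℝ):ℂ) = s ^ 2 := by
          rw [Complex.normSq_ofReal]; ring
        rw [h1, h2, hα, hβ]
        linarith [hroot]
  obtain ⟨w, hwne, hAw, hwneu⟩ := hW
  have hTw : T w = 0 := by rw [hTA, hAw, map_zero]
  -- Step 2 : some z₁ with positive T-form
  have hz1 : ∃ z : K, 0 < (@inner ℂ K _ (T z) z).re := by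
    by_contra h
    push_neg at h
    have hzero : ∀ x : K, @inner ℂ K _ (T x) x = 0 := by
      intro x
      have hre : (@inner ℂ K _ (T x) x).re = 0 := le_antisymm (h x) (hpos' x)
      have hconj : starRingEnd ℂ (@inner ℂ K _ (T x) x) = @inner ℂ K _ (T x) x := by
        rw [inner_conj_symm]; exact (hTsym x x).symm
      have him : (@inner ℂ K _ (T x) x).im = 0 := by
        have h6 := congrArg Complex.im hconj
        rw [Complex.conj_im] at h6
        linarith
      exact Complex.ext hre him
    have hT0 : (T : K →ₗ[ℂ] K) = 0 := (inner_map_self_eq_zero _).mp (fun x => hzero x)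
    apply hA0
    ext x
    have hTx : T x = 0 := by
      have := congrArg (fun f : K →ₗ[ℂ] K => f x) hT0; simpa using this
    have hAx : A x = J (T x) := by rw [hTA, hJJ']
    rw [hAx, hTx]; simp
  obtain ⟨z₁, hz₁⟩ := hz1
  -- Step 3 : z with positive T-form and ⟪J z, w⟫ ≠ 0
  have hz : ∃ z : K, 0 < (@inner ℂ K _ (T z) z).re ∧ @inner ℂ K _ (J z) w ≠ 0 := by
    have hw2 : @inner ℂ K _ (J (J w)) w = @inner ℂ K _ w w := by rw [hJJ']
    have hwww : @inner ℂ K _ w w ≠ 0 := fun h => hwne (inner_self_eq_zero.mp h)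
    by_cases hcc : @inner ℂ K _ (J z₁) w = 0
    · set d := ((@inner ℂ K _ (T z₁) (J w)).re) with hd
      set a₁ := (@inner ℂ K _ (T z₁) z₁).re with ha₁
      set ε := a₁ / (4 * (|d| + 1)) with hε
      have hεpos : 0 < ε := by
        apply div_pos hz₁; positivity
      refine ⟨z₁ + ((ε:ℝ) : ℂ) • (J w), ?_, ?_⟩
      · rw [expand_re T hTsym]
        have h1 : (((ε:ℝ):ℂ) * @inner ℂ K _ (T z₁) (J w)).re = ε * d := by
          rw [hd, Complex.re_ofReal_mul]
        rw [h1]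
        have h2 : Complex.normSq ((ε:ℝ):ℂ) = ε ^ 2 := by
          rw [Complex.normSq_ofReal]; ring
        rw [h2]
        have h3 := hpos' (J w)
        have h4 : ε * (|d| + 1) = a₁ / 4 := by
          rw [hε]; field_simp
        nlinarith [le_abs_self d, neg_abs_le d, sq_nonneg ε, hεpos, hz₁]
      · rw [map_add, map_smul, inner_add_left, inner_smul_left, hcc, hw2,
          Complex.conj_ofReal]
        simpa using mul_ne_zero (Complex.ofReal_ne_zero.mpr (ne_of_gt hεpos)) hwww
    · exact ⟨z₁, hz₁, hcc⟩
  obtain ⟨z, hza, hzc⟩ := hz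
  have hnormc : 0 < Complex.normSq (@inner ℂ K _ (J z) w) := by
    rwa [Complex.normSq_pos]
  -- final step
  ext r
  simp only [Set.mem_union, Set.mem_singleton_iff, Set.mem_univ, iff_true]
  by_cases hr : r = 0
  · right; exact hr
  left
  set a := (@inner ℂ K _ (T z) z).re with ha
  set c := @inner ℂ K _ (J z) w with hcdef
  set t := (a / r - kreinRe J z z) / (2 * Complex.normSq c) with ht
  set lam := ((t:ℝ) : ℂ) * starRingEnd ℂ c with hlam
  have hlc : (lam * c).re = t * Complex.normSq c := by
    rw [hlam, mul_assoc, mul_comm (starRingEnd ℂ c) c, Complex.mul_conj,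
      ← Complex.ofReal_mul, Complex.ofReal_re]
  have hxx : kreinRe J (z + lam • w) (z + lam • w) = a / r := by
    have hexp := expand_re J hJsym z w lam
    have hzz : (@inner ℂ K _ (J z) z).re = kreinRe J z z := rfl
    show (@inner ℂ K _ (J (z + lam • w)) (z + lam • w)).re = a / r
    rw [hexp, hwneu, hlc, hzz, ht, mul_zero, add_zero]
    field_simp
    ring
  have hTxx : kreinRe J (A (z + lam • w)) (z + lam • w) = a := by
    rw [hkre, expand_re T hTsym z w lam, hTsym z w, hTw, inner_zero_right,
      inner_zero_left]
    simp [ha]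
  have haru : a / r ≠ 0 := div_ne_zero (ne_of_gt hza) hr
  refine ⟨z + lam • w, ?_, ?_⟩
  · rw [hxx]; exact haru
  · rw [hTxx, hxx]
    field_simp
end

section
/- Let A ≠ 0 be a non-negative operator in the Krein space K and let K be indefinite. Then 0 ∈ W(A) if and only if 0 is an eigenvalue of A and ker A is not neutral, i.e. if and only if there exists x ∈ K with A x = 0 and re⟪J x, x⟫ ≠ 0. -/
open Set Filter Topology

variable {K : Type*} [NormedAddCommGroup K] [InnerProductSpace ℂ K] [CompleteSpace K]

set_option synthInstance.maxHeartbeats 1000000 in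
private lemma pos_inner_zero_imp_zero (T : K →L[ℂ] K) (h : T.IsPositive) (x : K)
    (hx : (@inner ℂ K _ (T x) x).re = 0) : T x = 0 := by
  have h0 : (0:K →L[ℂ] K) ≤ T := (ContinuousLinearMap.nonneg_iff_isPositive T).mpr h
  set S := CFC.sqrt T with hS
  have hSS : S * S = T := CFC.sqrt_mul_sqrt_self T h0
  have hSsa : IsSelfAdjoint S := IsSelfAdjoint.of_nonneg (CFC.sqrt_nonneg T)
  have key : (@inner ℂ K _ ((S * S) x) x) = (@inner ℂ K _ (S x) (S x)) := by
    have hsym := (ContinuousLinearMap.isSelfAdjoint_iff_isSymmetric).mp hSsa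
    simpa [ContinuousLinearMap.mul_apply] using hsym (S x) x
  have hSx : S x = 0 := by
    have h2 : ‖S x‖ ^ 2 = 0 := by
      rw [← inner_self_eq_norm_sq (𝕜 := ℂ), ← key, hSS]; exact hx
    simpa using pow_eq_zero_iff (two_ne_zero) |>.mp h2
  rw [← hSS]
  simp [ContinuousLinearMap.mul_apply, hSx]

/-- `0 ∈ W(A)` iff `0` is an eigenvalue of `A` and `ker A` is not neutral. -/
theorem stmt_6 (J A : K →L[ℂ] K) (hJ : IsFundamentalSymmetry J)
    (hA : IsKreinNonneg J A) (hA0 : A ≠ 0) (hind : KreinIndefinite J) :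
    (0 : ℝ) ∈ kreinW J A ↔ ∃ x : K, A x = 0 ∧ kreinRe J x x ≠ 0 := by
  constructor
  · rintro ⟨x, hx0, hx⟩
    have hzero : kreinRe J (A x) x = 0 := by
      rcases div_eq_zero_iff.mp hx.symm with h | h
      · exact h
      · exact absurd h hx0
    have hTpos : (J ∘L A).IsPositive := by
      refine ⟨(ContinuousLinearMap.isSelfAdjoint_iff_isSymmetric).mp hA.1, fun y => ?_⟩
      simpa [ContinuousLinearMap.reApplyInnerSelf, kreinRe] using hA.2 y
    have hT0 : (J ∘L A) x = 0 := pos_inner_zero_imp_zero (J ∘L A) hTpos x (by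
      simpa [kreinRe] using hzero)
    refine ⟨x, ?_, hx0⟩
    have h1 : J (J (A x)) = J 0 := congrArg J (by simpa using hT0)
    rw [← ContinuousLinearMap.comp_apply J J (A x), hJ.2] at h1
    simpa using h1
  · rintro ⟨x, hAx, hx0⟩
    exact ⟨x, hx0, by simp [kreinRe, hAx]⟩
end

section
/- Let A be a non-negative operator in the Krein space K. Then for every x ∈ K one has re⟪J (A (A (A x))), x⟫ ≤ ‖A‖² · re⟪J (A x), x⟫ (the inequality [A³x, x] ≤ ‖A‖² [Ax, x] obtained from Reid's inequality). -/
open Set Filter Topology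

variable {K : Type*} [NormedAddCommGroup K] [InnerProductSpace ℂ K] [CompleteSpace K]

local notation "⟪" x ", " y "⟫" => @inner ℂ K _ x y

/-- Cauchy–Schwarz for the semi-definite form `(u,v) ↦ re ⟪T u, v⟫`. -/
lemma krein_cs (T : K →L[ℂ] K) (hsym : ∀ u v : K, ⟪T u, v⟫ = ⟪u, T v⟫)
    (hnn : ∀ u : K, 0 ≤ (⟪T u, u⟫).re) (u v : K) :
    (⟪T u, v⟫).re ^ 2 ≤ (⟪T u, u⟫).re * (⟪T v, v⟫).re := by
  have hswap : (⟪T v, u⟫).re = (⟪T u, v⟫).re := by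
    rw [hsym v u, ← inner_conj_symm (T u) v, Complex.conj_re]
  have key : ∀ t : ℝ, 0 ≤ (⟪T v, v⟫).re * (t * t) + (2 * (⟪T u, v⟫).re) * t
      + (⟪T u, u⟫).re := by
    intro t
    have h := hnn (u + (t : ℂ) • v)
    have hexp : ⟪T (u + (t : ℂ) • v), u + (t : ℂ) • v⟫
        = ⟪T u, u⟫ + (t : ℂ) * ⟪T u, v⟫ + (t : ℂ) * ⟪T v, u⟫
          + (t : ℂ) * ((t : ℂ) * ⟪T v, v⟫) := by
      rw [map_add, map_smul, inner_add_left, inner_add_right, inner_add_right,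
        inner_smul_left, inner_smul_right, inner_smul_left, inner_smul_right]
      push_cast
      ring_nf
      simp [Complex.conj_ofReal]
      ring
    rw [hexp] at h
    simp only [Complex.add_re, Complex.mul_re, Complex.ofReal_re, Complex.ofReal_im] at h
    rw [hswap] at h
    nlinarith [h]
  have hd := discrim_le_zero key
  rw [discrim] at hd
  nlinarith [hd]

/-- Reid's inequality: `[A³ x, x] ≤ ‖A‖² [A x, x]` for all `x`. -/
theorem stmt_12 (J A : K →L[ℂ] K) (hJ : IsFundamentalSymmetry J)
    (hA : IsKreinNonneg J A) :
    ∀ x : K, kreinRe J (A (A (A x))) x ≤ ‖A‖ ^ 2 * kreinRe J (A x) x := by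
  intro x
  set T : K →L[ℂ] K := J ∘L A with hTdef
  have hsym : ∀ u v : K, ⟪T u, v⟫ = ⟪u, T v⟫ := fun u v =>
    (ContinuousLinearMap.isSelfAdjoint_iff_isSymmetric.mp hA.1) u v
  have hnn : ∀ u : K, 0 ≤ (⟪T u, u⟫).re := fun u => hA.2 u
  have hJsym : ∀ u v : K, ⟪J u, v⟫ = ⟪u, J v⟫ := fun u v =>
    (ContinuousLinearMap.isSelfAdjoint_iff_isSymmetric.mp hJ.1) u v
  have hAJT : ∀ u : K, A u = J (T u) := by
    intro u
    have h := ContinuousLinearMap.ext_iff.mp hJ.2 (A u)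
    simpa [hTdef] using h.symm
  have shift : ∀ u v : K, ⟪T (A u), v⟫ = ⟪T u, A v⟫ := by
    intro u v
    calc ⟪T (A u), v⟫ = ⟪A u, T v⟫ := hsym _ _
      _ = ⟪J (T u), T v⟫ := by rw [hAJT]
      _ = ⟪T u, J (T v)⟫ := hJsym _ _
      _ = ⟪T u, A v⟫ := by rw [← hAJT]
  -- the sequence cₖ = re ⟪T Aᵏx, Aᵏx⟫
  set c : ℕ → ℝ := fun k => (⟪T ((A ^ k) x), (A ^ k) x⟫).re with hcdef
  have hpowsucc : ∀ k : ℕ, (A ^ (k + 1)) x = A ((A ^ k) x) := by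
    intro k
    rw [pow_succ']
    rfl
  have key : ∀ a b : ℕ, ⟪T ((A ^ a) x), (A ^ b) x⟫ = ⟪T ((A ^ (a + b)) x), x⟫ := by
    intro a b
    induction b generalizing a with
    | zero => simp
    | succ b ih =>
      rw [hpowsucc b, ← shift, ← hpowsucc a, ih (a + 1)]
      ring_nf
  have cnn : ∀ k, 0 ≤ c k := fun k => hnn _
  have csq : ∀ k, c k ^ 2 ≤ c (2 * k) * c 0 := by
    intro k
    have h1 : c k = (⟪T ((A ^ (2 * k)) x), x⟫).re := by
      simp only [hcdef]
      rw [key k k, two_mul]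
    have h2 := krein_cs T hsym hnn ((A ^ (2 * k)) x) x
    rw [h1]
    refine h2.trans_eq ?_
    simp only [hcdef]
    simp
  have hApow : ∀ k : ℕ, ‖(A ^ k) x‖ ≤ ‖A‖ ^ k * ‖x‖ := by
    intro k
    induction k with
    | zero => simp
    | succ k ih =>
      rw [hpowsucc]
      calc ‖A ((A ^ k) x)‖ ≤ ‖A‖ * ‖(A ^ k) x‖ := A.le_opNorm _
        _ ≤ ‖A‖ * (‖A‖ ^ k * ‖x‖) := by
            exact mul_le_mul_of_nonneg_left ih (norm_nonneg A)
        _ = ‖A‖ ^ (k + 1) * ‖x‖ := by ring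
  have cbound : ∀ k, c k ≤ (‖T‖ * ‖x‖ ^ 2) * (‖A‖ ^ 2) ^ k := by
    intro k
    have h1 : c k ≤ ‖T ((A ^ k) x)‖ * ‖(A ^ k) x‖ := by
      refine le_trans (Complex.re_le_norm _) ?_
      exact norm_inner_le_norm _ _
    have h2 : ‖T ((A ^ k) x)‖ ≤ ‖T‖ * ‖(A ^ k) x‖ := T.le_opNorm _
    have h3 := hApow k
    have h4 : ((‖A‖ : ℝ) ^ k) ^ 2 = (‖A‖ ^ 2) ^ k := by
      rw [← pow_mul, ← pow_mul, Nat.mul_comm]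
    calc c k ≤ ‖T ((A ^ k) x)‖ * ‖(A ^ k) x‖ := h1
      _ ≤ (‖T‖ * ‖(A ^ k) x‖) * ‖(A ^ k) x‖ :=
          mul_le_mul_of_nonneg_right h2 (norm_nonneg _)
      _ = ‖T‖ * ‖(A ^ k) x‖ ^ 2 := by ring
      _ ≤ ‖T‖ * (‖A‖ ^ k * ‖x‖) ^ 2 :=
          mul_le_mul_of_nonneg_left (pow_le_pow_left₀ (norm_nonneg _) h3 2) (norm_nonneg T)
      _ = (‖T‖ * ‖x‖ ^ 2) * (‖A‖ ^ 2) ^ k := by rw [mul_pow, h4]; ring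
  -- reduce the goal to `c 1 ≤ ‖A‖ ^ 2 * c 0`
  have hgoal : kreinRe J (A (A (A x))) x = (⟪T ((A ^ 2) x), x⟫).re := by
    have : (A ^ 2) x = A (A x) := by
      rw [hpowsucc 1, hpowsucc 0]; simp
    rw [this]
    rfl
  have hgoal2 : kreinRe J (A x) x = c 0 := by
    simp only [hcdef]
    simp only [pow_zero, ContinuousLinearMap.one_apply]
    rfl
  have hc1 : kreinRe J (A (A (A x))) x = c 1 := by
    rw [hgoal]
    simp only [hcdef]
    rw [key 1 1]
  rw [hc1, hgoal2]
  -- main argument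
  by_cases hA0 : ‖A‖ = 0
  · have : A = 0 := by
      ext y
      have h0 : A y = 0 := by simpa [hA0] using A.le_opNorm y
      simp [h0]
    have hc10 : c 1 = 0 := by
      simp only [hcdef, this]
      simp
    rw [hc10, hA0]
    simp [cnn 0]
  · have hAn : 0 < ‖A‖ := lt_of_le_of_ne (norm_nonneg A) (Ne.symm hA0)
    by_cases hc0 : c 0 = 0
    · have h := csq 1
      rw [hc0, mul_zero] at h
      have : c 1 = 0 := le_antisymm (by nlinarith [cnn 1]) (cnn 1)
      rw [this, hc0]
      simp
    · have hc0pos : 0 < c 0 := lt_of_le_of_ne (cnn 0) (Ne.symm hc0)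
      -- iterated inequality: c1 ^ (2^n) * c0 ≤ c (2^n) * c0 ^ (2^n)
      have hiter : ∀ n : ℕ, c 1 ^ (2 ^ n) * c 0 ≤ c (2 ^ n) * c 0 ^ (2 ^ n) := by
        intro n
        induction n with
        | zero => simp
        | succ n ih =>
          have hN : (2 : ℕ) ^ (n + 1) = 2 * 2 ^ n := by rw [pow_succ]; ring
          have hsq : (c 1 ^ (2 ^ n) * c 0) ^ 2 ≤ (c (2 ^ n) * c 0 ^ (2 ^ n)) ^ 2 := by
            have hl : 0 ≤ c 1 ^ (2 ^ n) * c 0 :=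
              mul_nonneg (pow_nonneg (cnn 1) _) (cnn 0)
            exact pow_le_pow_left₀ hl ih 2
          have hcs := csq (2 ^ n)
          have hmul : c (2 ^ n) ^ 2 * (c 0 ^ (2 ^ n)) ^ 2
              ≤ (c (2 * 2 ^ n) * c 0) * (c 0 ^ (2 ^ n)) ^ 2 :=
            mul_le_mul_of_nonneg_right hcs (pow_nonneg (pow_nonneg (cnn 0) _) 2)
          have hcomb : c 1 ^ (2 ^ (n + 1)) * c 0 ^ 2
              ≤ (c (2 ^ (n + 1)) * c 0 ^ (2 ^ (n + 1))) * c 0 := by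
            have e1 : c 1 ^ (2 ^ (n + 1)) * c 0 ^ 2 = (c 1 ^ (2 ^ n) * c 0) ^ 2 := by
              rw [hN, mul_pow, ← pow_mul, Nat.mul_comm]
            have e2 : (c (2 ^ n) * c 0 ^ (2 ^ n)) ^ 2 = c (2 ^ n) ^ 2 * (c 0 ^ (2 ^ n)) ^ 2 := by
              ring
            have e3 : (c (2 * 2 ^ n) * c 0) * (c 0 ^ (2 ^ n)) ^ 2
                = (c (2 ^ (n + 1)) * c 0 ^ (2 ^ (n + 1))) * c 0 := by
              rw [hN, ← pow_mul, Nat.mul_comm (2 ^ n) 2]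
              ring_nf
            rw [e1, ← e3]
            exact hsq.trans (by rw [e2]; exact hmul)
          nlinarith [hcomb, hc0pos]
      -- combine with the bound
      set C : ℝ := ‖T‖ * ‖x‖ ^ 2 with hCdef
      set b : ℝ := ‖A‖ ^ 2 * c 0 with hbdef
      have hbpos : 0 < b := mul_pos (by positivity) hc0pos
      have hfin : ∀ n : ℕ, c 1 ^ (2 ^ n) * c 0 ≤ C * b ^ (2 ^ n) := by
        intro n
        calc c 1 ^ (2 ^ n) * c 0 ≤ c (2 ^ n) * c 0 ^ (2 ^ n) := hiter n
          _ ≤ (C * (‖A‖ ^ 2) ^ (2 ^ n)) * c 0 ^ (2 ^ n) :=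
              mul_le_mul_of_nonneg_right (cbound (2 ^ n)) (pow_nonneg (cnn 0) _)
          _ = C * b ^ (2 ^ n) := by rw [hbdef, mul_pow]; ring
      by_contra hcon
      have hb : b < c 1 := not_le.mp hcon
      have hr : 1 < c 1 / b := (one_lt_div hbpos).mpr hb
      obtain ⟨n, hn⟩ := pow_unbounded_of_one_lt (C / c 0) hr
      have h1 : (c 1 / b) ^ n ≤ (c 1 / b) ^ (2 ^ n) :=
        pow_le_pow_right₀ hr.le (Nat.lt_two_pow_self (n := n)).le
      have h2 : C / c 0 < (c 1 / b) ^ (2 ^ n) := lt_of_lt_of_le hn h1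
      have h4 : (c 1 / b) ^ (2 ^ n) ≤ C / c 0 := by
        rw [div_pow, div_le_div_iff₀ (pow_pos hbpos _) hc0pos]
        exact hfin n
      exact absurd h4 (not_le.mpr h2)
end

section
/- Let A ≠ 0 be a non-negative operator in the Krein space K, let K be indefinite, and assume that the range of A is negative. Then no t > 0 satisfies (t : ℂ) ∈ spectrum ℂ A (i.e. σℝ(A) ∩ (0,∞) = ∅), the set σℝ(A) ∩ (-∞,0) is nonempty, and W_co(A) \ {ν₋, μ₋} = (ν₋, μ₋) (the open interval from ν₋ to μ₋). -/
open Set Filter Topology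

variable {K : Type*} [NormedAddCommGroup K] [InnerProductSpace ℂ K] [CompleteSpace K]

local notation "⟪" x ", " y "⟫" => @inner ℂ _ _ x y

set_option linter.unusedSectionVars false

lemma krein14_sa_inner {S : K →L[ℂ] K} (hS : IsSelfAdjoint S) (x y : K) :
    ⟪S x, y⟫ = ⟪x, S y⟫ :=
  ((ContinuousLinearMap.isSelfAdjoint_iff_isSymmetric.mp hS)).apply_clm x y

lemma krein14_sa_smul_one (t : ℝ) : IsSelfAdjoint (t • (1 : K →L[ℂ] K)) := by
  simp [IsSelfAdjoint, star_smul]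

lemma krein14_nonneg_iff {T : K →L[ℂ] K} (hT : IsSelfAdjoint T) :
    0 ≤ T ↔ ∀ x : K, 0 ≤ (⟪T x, x⟫).re := by
  rw [T.nonneg_iff_isPositive]
  constructor
  · intro h x
    simpa [ContinuousLinearMap.reApplyInnerSelf_apply] using h.2 x
  · intro h
    exact ⟨ContinuousLinearMap.isSelfAdjoint_iff_isSymmetric.mp hT, fun x => by simpa [ContinuousLinearMap.reApplyInnerSelf_apply] using h x⟩

lemma krein14_real_smul (r : ℝ) (z : K) : r • z = (r : ℂ) • z := by
  rw [← algebraMap_smul ℂ r z, Complex.coe_algebraMap]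

lemma krein14_inner_real_smul_left (r : ℝ) (x y : K) : ⟪r • x, y⟫ = (r : ℂ) * ⟪x, y⟫ := by
  rw [krein14_real_smul, inner_smul_left, Complex.conj_ofReal]

lemma krein14_inner_real_smul_right (r : ℝ) (x y : K) : ⟪x, r • y⟫ = (r : ℂ) * ⟪x, y⟫ := by
  rw [krein14_real_smul, inner_smul_right]

lemma krein14_re_ofReal_mul (r : ℝ) (w : ℂ) : ((r : ℂ) * w).re = r * w.re := by
  simp [Complex.mul_re]

lemma krein14_inner_self (z : K) : (⟪z, z⟫).re = ‖z‖^2 := by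
  rw [← RCLike.re_to_complex]; exact inner_self_eq_norm_sq z

lemma krein14_smul_one_apply (t : ℝ) (z : K) : (t • (1 : K →L[ℂ] K)) z = t • z := by simp

lemma krein14_algebraMap_eq (t : ℝ) :
    algebraMap ℝ (K →L[ℂ] K) t = t • (1 : K →L[ℂ] K) :=
  Algebra.algebraMap_eq_smul_one t

lemma krein14_spec_mem_iff {S : K →L[ℂ] K} {t : ℝ} :
    t ∈ spectrum ℝ S ↔ (t : ℂ) ∈ spectrum ℂ S := by
  rw [← spectrum.algebraMap_mem_iff ℂ]
  norm_num

lemma krein14_rayleigh_ge {S : K →L[ℂ] K} (hS : IsSelfAdjoint S) {c : ℝ}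
    (h : ∀ s ∈ spectrum ℝ S, c ≤ s) (z : K) : c * ‖z‖^2 ≤ (⟪S z, z⟫).re := by
  have h1 : 0 ≤ cfc (fun s : ℝ => s - c) S := cfc_nonneg fun s hs => sub_nonneg.2 (h s hs)
  have h2 : cfc (fun s : ℝ => s - c) S = S - c • 1 := by
    rw [cfc_sub (fun s : ℝ => s) (fun _ : ℝ => c) S, cfc_id' ℝ S, cfc_const c S,
      krein14_algebraMap_eq]
  rw [h2, krein14_nonneg_iff (hS.sub (krein14_sa_smul_one c))] at h1
  have := h1 z
  simp only [ContinuousLinearMap.sub_apply, krein14_smul_one_apply, inner_sub_left,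
    krein14_inner_real_smul_left, Complex.sub_re, krein14_re_ofReal_mul,
    krein14_inner_self] at this
  linarith

lemma krein14_spec_nonpos {S : K →L[ℂ] K} (hS : IsSelfAdjoint S)
    (h : ∀ z : K, (⟪S z, z⟫).re ≤ 0) : ∀ s ∈ spectrum ℝ S, s ≤ 0 := by
  intro s hs
  have hnn : 0 ≤ -S := by
    rw [krein14_nonneg_iff hS.neg]
    intro x
    have := h x
    simp only [ContinuousLinearMap.neg_apply, inner_neg_left, Complex.neg_re]
    linarith
  have hspec := (StarOrderedRing.nonneg_iff_spectrum_nonneg (R := ℝ) (-S) hS.neg).mp hnn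
  have : -s ∈ spectrum ℝ (-S) := by
    rw [← spectrum.neg_eq]; exact Set.neg_mem_neg.mpr hs
  linarith [hspec _ this]

lemma krein14_approx_eig {S : K →L[ℂ] K} (hS : IsSelfAdjoint S) {t : ℝ}
    (ht : t ∈ spectrum ℝ S) {δ : ℝ} (hδ : 0 < δ) :
    ∃ z : K, ‖z‖ = 1 ∧ ‖S z - t • z‖ < δ := by
  by_contra hcon
  push_neg at hcon
  set Q : K →L[ℂ] K := S - t • 1 with hQdef
  have hQz : ∀ z : K, Q z = S z - t • z := by
    intro z; simp [hQdef]
  have hQsa : IsSelfAdjoint Q := hS.sub (krein14_sa_smul_one t)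
  have hzero : ∀ z : K, δ * ‖z‖ ≤ ‖Q z‖ := by
    intro z
    rcases eq_or_ne z 0 with rfl | hz
    · simp
    · have hu : ‖(‖z‖⁻¹ : ℝ) • z‖ = 1 := by
        rw [norm_smul]
        simp [norm_ne_zero_iff.mpr hz]
      have := hcon ((‖z‖⁻¹ : ℝ) • z) hu
      have heq : S ((‖z‖⁻¹ : ℝ) • z) - t • ((‖z‖⁻¹ : ℝ) • z) = (‖z‖⁻¹ : ℝ) • (S z - t • z) := by
        rw [S.map_smul_of_tower, smul_comm, smul_sub]
      rw [heq, norm_smul] at this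
      have hz' : (0:ℝ) < ‖z‖ := norm_pos_iff.mpr hz
      rw [norm_inv, Real.norm_of_nonneg hz'.le] at this
      rw [hQz]
      calc δ * ‖z‖ ≤ (‖z‖⁻¹ * ‖S z - t • z‖) * ‖z‖ := by nlinarith
      _ = ‖S z - t • z‖ := by field_simp
  have hQQsa : IsSelfAdjoint (Q * Q) := by
    rw [IsSelfAdjoint, star_mul, hQsa.star_eq]
  have hpos : 0 ≤ Q * Q - (δ^2) • 1 := by
    rw [krein14_nonneg_iff (hQQsa.sub (krein14_sa_smul_one (δ^2)))]
    intro z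
    have h1 : ⟪(Q * Q) z, z⟫ = ⟪Q z, Q z⟫ := by
      rw [ContinuousLinearMap.mul_apply]
      exact krein14_sa_inner hQsa (Q z) z
    have h3 : (δ * ‖z‖)^2 ≤ ‖Q z‖^2 := by
      exact pow_le_pow_left₀ (mul_nonneg hδ.le (norm_nonneg z)) (hzero z) 2
    have h4 : (⟪(Q * Q) z, z⟫).re = ‖Q z‖^2 := by rw [h1, krein14_inner_self]
    rw [ContinuousLinearMap.sub_apply, inner_sub_left]
    simp only [Complex.sub_re, krein14_smul_one_apply, krein14_inner_real_smul_left,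
      krein14_re_ofReal_mul, krein14_inner_self, h4]
    nlinarith [h3, norm_nonneg z]
  have hcfc : cfc (fun s : ℝ => (s - t)^2 - δ^2) S = Q * Q - (δ^2) • 1 := by
    rw [cfc_sub (fun s : ℝ => (s - t)^2) (fun _ : ℝ => δ^2) S,
      cfc_pow (fun s : ℝ => s - t) 2 S, cfc_sub (fun s : ℝ => s) (fun _ : ℝ => t) S,
      cfc_id' ℝ S, cfc_const t S, cfc_const (δ^2) S, krein14_algebraMap_eq,
      krein14_algebraMap_eq, ← hQdef, sq]
  rw [← hcfc] at hpos
  have := (cfc_nonneg_iff (fun s : ℝ => (s - t)^2 - δ^2) S (by fun_prop) hS).mp hpos t ht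
  nlinarith

set_option maxHeartbeats 2000000

/-- Theorem (i) on the co-numerical range: if `ran A` is negative, then
`σ(A) ∩ ℝ⁺ = ∅`, `σ(A) ∩ ℝ⁻ ≠ ∅` and `W_co(A) \ {ν₋, μ₋} = (ν₋, μ₋)`. -/
theorem stmt_14 (J A : K →L[ℂ] K) (hJ : IsFundamentalSymmetry J)
    (hA : IsKreinNonneg J A) (hA0 : A ≠ 0) (hind : KreinIndefinite J)
    (hran : ∀ y ∈ Set.range (A : K → K), y ≠ 0 → kreinRe J y y < 0) :
    (∀ t : ℝ, 0 < t → (t : ℂ) ∉ spectrum ℂ A) ∧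
      (sigmaR A ∩ Set.Iio 0).Nonempty ∧
      kreinWco J A \ {sInf (sigmaR A ∩ Set.Iio 0), sSup (sigmaR A ∩ Set.Iio 0)} =
        Set.Ioo (sInf (sigmaR A ∩ Set.Iio 0)) (sSup (sigmaR A ∩ Set.Iio 0)) := by
  obtain ⟨hJsa, hJ2⟩ := hJ
  obtain ⟨hBsa, hBnn'⟩ := hA
  set B : K →L[ℂ] K := J ∘L A with hBdef
  have hJJ : ∀ z : K, J (J z) = z := by
    intro z
    have : (J ∘L J) z = (1 : K →L[ℂ] K) z := by rw [hJ2]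
    simpa using this
  have hBx : ∀ x, B x = J (A x) := fun x => rfl
  have hAx : ∀ x, A x = J (B x) := fun x => by rw [hBx, hJJ]
  have hBnn : ∀ x : K, 0 ≤ (⟪B x, x⟫).re := hBnn'
  have hB0 : 0 ≤ B := (krein14_nonneg_iff hBsa).mpr hBnn
  have hBspec : ∀ s ∈ spectrum ℝ B, 0 ≤ s :=
    (StarOrderedRing.nonneg_iff_spectrum_nonneg (R := ℝ) B hBsa).mp hB0
  set R : K →L[ℂ] K := cfc Real.sqrt B with hRdef
  have hRsa : IsSelfAdjoint R := cfc_predicate _ _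
  have hRR : R * R = B := by
    rw [hRdef, ← cfc_mul Real.sqrt Real.sqrt B Real.continuous_sqrt.continuousOn
      Real.continuous_sqrt.continuousOn]
    have h1 : cfc (fun s : ℝ => Real.sqrt s * Real.sqrt s) B = cfc (fun s : ℝ => s) B :=
      cfc_congr (fun s hs => Real.mul_self_sqrt (hBspec s hs))
    rw [h1, cfc_id' ℝ B hBsa]
  have hRRx : ∀ x, R (R x) = B x := fun x => by
    rw [← ContinuousLinearMap.mul_apply, hRR]
  set S : K →L[ℂ] K := R * J * R with hSdef
  have hSx : ∀ z, S z = R (J (R z)) := fun z => by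
    simp [hSdef, ContinuousLinearMap.mul_apply]
  have hSsa : IsSelfAdjoint S := by
    rw [IsSelfAdjoint, hSdef, star_mul, star_mul, hRsa.star_eq, hJsa.star_eq, mul_assoc]
  -- the basic identities
  have f2 : ∀ x, kreinRe J (A x) x = ‖R x‖^2 := by
    intro x
    show (⟪J (A x), x⟫).re = ‖R x‖^2
    rw [← hBx, ← hRRx, krein14_sa_inner hRsa (R x) x, krein14_inner_self]
  have f1' : ∀ x, ⟪S (R x), R x⟫ = ⟪J (B x), B x⟫ := by
    intro x
    rw [hSx, krein14_sa_inner hRsa (J (R (R x))) (R x), hRRx]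
  have f1 : ∀ x, kreinRe J (A x) (A x) = (⟪S (R x), R x⟫).re := by
    intro x
    show (⟪J (A x), A x⟫).re = _
    rw [f1', ← hBx, hAx]
    rw [← RCLike.re_to_complex, ← RCLike.re_to_complex]
    exact inner_re_symm _ _
  have hstrict : ∀ x : K, B x ≠ 0 → (⟪S (R x), R x⟫).re < 0 := by
    intro x hx
    rw [← f1]
    refine hran (A x) ⟨x, rfl⟩ ?_
    intro h0
    exact hx (by rw [hBx, h0, map_zero])
  -- negativity of S
  have hSneg : ∀ z : K, (⟪S z, z⟫).re ≤ 0 := by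
    intro z
    have h1 : ⟪S z, z⟫ = ⟪J (R z), R z⟫ := by
      rw [hSx]; exact krein14_sa_inner hRsa (J (R z)) z
    rw [h1]
    have hqcont : Continuous fun y : K => (⟪J y, y⟫).re :=
      Complex.continuous_re.comp (continuous_inner.comp (J.continuous.prodMk continuous_id))
    have hqB : Set.range (B : K → K) ⊆ {y : K | (⟪J y, y⟫).re ≤ 0} := by
      rintro y ⟨x, rfl⟩
      rcases eq_or_ne (B x) 0 with h0 | h0
      · show (⟪J (B x), B x⟫).re ≤ 0
        rw [h0]; simp
      · show (⟪J (B x), B x⟫).re ≤ 0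
        rw [← f1']
        exact (hstrict x h0).le
    have hmem : R z ∈ closure (Set.range (B : K → K)) := by
      have hmem' : R z ∈ ((LinearMap.range (B : K →ₗ[ℂ] K))ᗮ)ᗮ := by
        rw [Submodule.mem_orthogonal]
        intro u hu
        rw [Submodule.mem_orthogonal] at hu
        have hBu : ⟪B u, u⟫ = 0 := hu (B u) (LinearMap.mem_range_self _ u)
        have hRu : R u = 0 := by
          rw [← inner_self_eq_zero (𝕜 := ℂ) (x := R u), ← krein14_sa_inner hRsa (R u) u, hRRx]
          exact hBu
        rw [← inner_conj_symm, krein14_sa_inner hRsa z u, hRu, inner_zero_right]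
        simp
      rw [Submodule.orthogonal_orthogonal_eq_closure] at hmem'
      have : ((LinearMap.range (B : K →ₗ[ℂ] K)).topologicalClosure : Set K)
          = closure (Set.range (B : K → K)) := by
        rw [Submodule.topologicalClosure_coe]
        congr 1
      rw [← this]
      exact hmem'
    exact closure_minimal hqB (isClosed_le hqcont continuous_const) hmem
  have hSspec_le : ∀ s ∈ spectrum ℝ S, s ≤ 0 := krein14_spec_nonpos hSsa hSneg
  -- spectra of A and S agree away from 0
  have hswap : spectrum ℂ A \ {0} = spectrum ℂ S \ {0} := by
    have hA_eq : A = (J * R) * R := by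
      have h1 : J * B = A := by
        ext x
        simp only [ContinuousLinearMap.mul_apply, hBx, hJJ]
      rw [← h1, ← hRR, ← mul_assoc]
    have hS_eq : S = R * (J * R) := by rw [hSdef, mul_assoc]
    rw [hA_eq, hS_eq]
    exact spectrum.nonzero_mul_comm (J * R) R
  have hAtoS : ∀ c : ℂ, c ≠ 0 → (c ∈ spectrum ℂ A ↔ c ∈ spectrum ℂ S) := by
    intro c hc
    constructor
    · intro h
      exact (hswap.subset ⟨h, hc⟩).1
    · intro h
      exact (hswap.superset ⟨h, hc⟩).1
  -- part 1
  have part1 : ∀ t : ℝ, 0 < t → (t : ℂ) ∉ spectrum ℂ A := by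
    intro t ht hmem
    have htne : (t : ℂ) ≠ 0 := by exact_mod_cast ht.ne'
    have h1 : t ∈ spectrum ℝ S := krein14_spec_mem_iff.mpr ((hAtoS _ htne).mp hmem)
    linarith [hSspec_le t h1]
  -- part 2
  obtain ⟨x₀, hx₀⟩ : ∃ x : K, A x ≠ 0 := by
    by_contra h
    push_neg at h
    exact hA0 (ContinuousLinearMap.ext fun x => by simp [h x])
  have hBx₀ : B x₀ ≠ 0 := fun h => hx₀ (by rw [hAx, h, map_zero])
  have hSRx₀ : (⟪S (R x₀), R x₀⟫).re < 0 := hstrict x₀ hBx₀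
  have hSigS : ∀ t : ℝ, t ∈ sigmaR A ∩ Set.Iio 0 ↔ (t ∈ spectrum ℝ S ∧ t < 0) := by
    intro t
    constructor
    · rintro ⟨h1, h2⟩
      rw [Set.mem_Iio] at h2
      refine ⟨krein14_spec_mem_iff.mpr ((hAtoS _ ?_).mp h1), h2⟩
      exact_mod_cast h2.ne
    · rintro ⟨h1, h2⟩
      refine ⟨?_, Set.mem_Iio.mpr h2⟩
      show (t : ℂ) ∈ spectrum ℂ A
      refine (hAtoS _ ?_).mpr (krein14_spec_mem_iff.mp h1)
      exact_mod_cast h2.ne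
  have part2 : (sigmaR A ∩ Set.Iio 0).Nonempty := by
    by_contra h
    rw [Set.not_nonempty_iff_eq_empty] at h
    have hSnn : ∀ s ∈ spectrum ℝ S, 0 ≤ s := by
      intro s hs
      by_contra hneg
      push_neg at hneg
      have : s ∈ sigmaR A ∩ Set.Iio 0 := (hSigS s).mpr ⟨hs, hneg⟩
      rw [h] at this
      exact this
    have := krein14_rayleigh_ge hSsa hSnn (R x₀)
    simp only [zero_mul] at this
    linarith
  refine ⟨part1, part2, ?_⟩
  -- part 3
  set Sig : Set ℝ := sigmaR A ∩ Set.Iio 0 with hSigdef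
  obtain ⟨t₀, ht₀⟩ := part2
  have ht₀2 : t₀ < 0 := ht₀.2
  have hbddA : BddAbove Sig := ⟨0, fun t ht => le_of_lt ht.2⟩
  haveI : Nontrivial K := by
    obtain ⟨⟨xp, hxp⟩, -⟩ := hind
    refine ⟨xp, 0, fun h => ?_⟩
    rw [h] at hxp
    simp [kreinRe] at hxp
  have hbddB : BddBelow Sig := by
    refine ⟨-‖S‖, fun t ht => ?_⟩
    have h1 : (t : ℂ) ∈ spectrum ℂ S := krein14_spec_mem_iff.mp ((hSigS t).mp ht).1
    have h2 := spectrum.norm_le_norm_of_mem h1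
    rw [Complex.norm_real, Real.norm_eq_abs] at h2
    linarith [(abs_le.mp h2).1]
  set ν := sInf Sig with hνdef
  set μ := sSup Sig with hμdef
  have hν0 : ν < 0 := lt_of_le_of_lt (csInf_le hbddB ht₀) ht₀2
  have hμ0 : μ ≤ 0 := csSup_le ⟨t₀, ht₀⟩ fun t ht => le_of_lt ht.2
  have hSlow : ∀ s ∈ spectrum ℝ S, ν ≤ s := by
    intro s hs
    rcases lt_or_ge s 0 with h | h
    · exact csInf_le hbddB ((hSigS s).mpr ⟨hs, h⟩)
    · linarith
  have hgap : ∀ s ∈ spectrum ℝ S, s = 0 ∨ s ≤ μ := by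
    intro s hs
    rcases eq_or_lt_of_le (hSspec_le s hs) with h | h
    · exact Or.inl h
    · exact Or.inr (le_csSup hbddA ((hSigS s).mpr ⟨hs, h⟩))
  set G : K → ℝ := fun y => (⟪S y, y⟫).re / ‖y‖^2 with hGdef
  have hG : ∀ y : K, G y = (⟪S y, y⟫).re / ‖y‖^2 := fun _ => rfl
  have hWiff : ∀ r : ℝ, r ∈ kreinWco J A ↔ ∃ x : K, R x ≠ 0 ∧ r = G (R x) := by
    intro r
    constructor
    · rintro ⟨x, hx1, hx2⟩
      refine ⟨x, fun h => hx1 (by rw [f2, h, norm_zero]; ring), ?_⟩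
      rw [hx2, f2, f1, hG]
    · rintro ⟨x, hx1, hx2⟩
      refine ⟨x, ?_, by rw [f2, f1, ← hG]; exact hx2⟩
      rw [f2]
      exact pow_ne_zero 2 (norm_ne_zero_iff.mpr hx1)
  have hlower : ∀ r ∈ kreinWco J A, ν ≤ r := by
    intro r hr
    obtain ⟨x, hx1, hx2⟩ := (hWiff r).mp hr
    have h1 := krein14_rayleigh_ge hSsa hSlow (R x)
    have hden : (0:ℝ) < ‖R x‖^2 := pow_pos (norm_pos_iff.mpr hx1) 2
    rw [hx2, hG, le_div_iff₀ hden]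
    linarith
  have hupper : ∀ r ∈ kreinWco J A, r ≤ μ := by
    intro r hr
    obtain ⟨x, hx1, hx2⟩ := (hWiff r).mp hr
    have hden : (0:ℝ) < ‖R x‖^2 := pow_pos (norm_pos_iff.mpr hx1) 2
    have hBxne : B x ≠ 0 := by
      intro h
      apply hx1
      rw [← inner_self_eq_zero (𝕜 := ℂ) (x := R x), ← krein14_sa_inner hRsa (R x) x, hRRx, h]
      exact inner_zero_left _
    rcases lt_or_ge μ 0 with hμneg | hμnn
    · -- gap case
      have hfc : ContinuousOn (fun s : ℝ => (min s μ)⁻¹) (spectrum ℝ S) := by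
        apply ContinuousOn.inv₀
        · exact (continuous_id.min continuous_const).continuousOn
        · intro s _
          exact ne_of_lt (lt_of_le_of_lt (min_le_right s μ) hμneg)
      set F := cfc (fun s : ℝ => (min s μ)⁻¹) S with hF
      set E := cfc (fun s : ℝ => s * (min s μ)⁻¹) S with hE
      have hEsa : IsSelfAdjoint E := cfc_predicate _ _
      have hEeq : E = S * F := by
        rw [hE, hF, cfc_mul (fun s : ℝ => s) (fun s : ℝ => (min s μ)⁻¹) S
          continuous_id.continuousOn hfc, cfc_id' ℝ S hSsa]
      have hSE : S * E = S := by
        have h1 : cfc (fun s : ℝ => s * (s * (min s μ)⁻¹)) S = S * E := by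
          rw [cfc_mul (fun s : ℝ => s) (fun s : ℝ => s * (min s μ)⁻¹) S
            continuous_id.continuousOn (continuous_id.continuousOn.mul hfc), cfc_id' ℝ S hSsa, hE]
        have h2 : cfc (fun s : ℝ => s * (s * (min s μ)⁻¹)) S = cfc (fun s : ℝ => s) S := by
          apply cfc_congr
          intro s hs
          rcases hgap s hs with h | h
          · simp [h]
          · show s * (s * (min s μ)⁻¹) = s
            have hsne : s ≠ 0 := by
              have := lt_of_le_of_lt h hμneg; linarith
            rw [min_eq_left h, mul_inv_cancel₀ hsne, mul_one]
        rw [← h1, h2, cfc_id' ℝ S hSsa]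
      have hμE : 0 ≤ μ • E - S := by
        have h1 : μ • E - S = cfc (fun s : ℝ => μ * (s * (min s μ)⁻¹) - s) S := by
          rw [cfc_sub (fun s : ℝ => μ * (s * (min s μ)⁻¹)) (fun s : ℝ => s) S
            (continuousOn_const.mul (continuous_id.continuousOn.mul hfc)) continuous_id.continuousOn,
            cfc_id' ℝ S hSsa, cfc_const_mul μ (fun s : ℝ => s * (min s μ)⁻¹) S
            (continuous_id.continuousOn.mul hfc), hE]
        rw [h1]
        apply cfc_nonneg
        intro s hs
        rcases hgap s hs with h | h
        · simp [h]
        · show 0 ≤ μ * (s * (min s μ)⁻¹) - s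
          have hsμ := lt_of_le_of_lt h hμneg
          have hsne : s ≠ 0 := by linarith
          rw [min_eq_left h, mul_inv_cancel₀ hsne, mul_one]
          linarith
      set y := R x with hy
      have hEy : E y = y := by
        set p := y - E y with hp
        have hErange : E y = S (F y) := by rw [hEeq, ContinuousLinearMap.mul_apply]
        obtain ⟨w, hw⟩ : ∃ w, R w = p := by
          refine ⟨x - J (R (F y)), ?_⟩
          rw [map_sub, hp, hy]
          congr 1
          rw [hErange, hSx]
        have hSp : S p = 0 := by
          have h1 : S (E y) = S y := by
            rw [← ContinuousLinearMap.mul_apply S E, hSE]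
          rw [hp, map_sub, h1, sub_self]
        have hBw : B w = 0 := by
          by_contra hBw
          have h2 := hstrict w hBw
          rw [hw, hSp] at h2
          simp at h2
        have hRp : R p = 0 := by rw [← hw, hRRx, hBw]
        have hpz : p = 0 := by
          rw [← inner_self_eq_zero (𝕜 := ℂ) (x := p)]
          nth_rewrite 1 [← hw]
          rw [krein14_sa_inner hRsa w p, hRp, inner_zero_right]
        have h3 : y - E y = 0 := by rw [← hp]; exact hpz
        exact (sub_eq_zero.mp h3).symm
      have hμEsa : IsSelfAdjoint (μ • E - S) := ((star_trivial μ) ▸ (IsSelfAdjoint.smul (star_trivial μ) hEsa)).sub hSsa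
      have h4 := (krein14_nonneg_iff hμEsa).mp hμE y
      simp only [ContinuousLinearMap.sub_apply, ContinuousLinearMap.smul_apply, hEy,
        inner_sub_left, krein14_inner_real_smul_left, Complex.sub_re, krein14_re_ofReal_mul,
        krein14_inner_self] at h4
      rw [hx2, hG, div_le_iff₀ hden]
      linarith
    · have : r < 0 := by
        rw [hx2, hG]
        exact div_neg_of_neg_of_pos (hstrict x hBxne) hden
      linarith
  have hGcont : ∀ z₀ : K, z₀ ≠ 0 → ContinuousAt G z₀ := by
    intro z₀ hz₀
    apply ContinuousAt.div
    · exact (Complex.continuous_re.comp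
        (continuous_inner.comp ((S.continuous).prodMk continuous_id))).continuousAt
    · exact (continuous_norm.pow 2).continuousAt
    · exact pow_ne_zero 2 (norm_ne_zero_iff.mpr hz₀)
  have happrox : ∀ t : ℝ, t ∈ spectrum ℝ S → t < 0 → ∀ ε : ℝ, 0 < ε →
      ∃ r' ∈ kreinWco J A, |r' - t| < ε := by
    intro t ht htneg ε hε
    have hτ : 0 < -t := by linarith
    set δ : ℝ := min (-t/2) (ε/8) with hδdef
    have hδpos : 0 < δ := lt_min (by linarith) (by linarith)
    have hδτ : δ ≤ -t/2 := min_le_left _ _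
    have hδε : δ ≤ ε/8 := min_le_right _ _
    obtain ⟨z, hz1, hz2⟩ := krein14_approx_eig hSsa ht hδpos
    set H₁ := (LinearMap.range (R : K →ₗ[ℂ] K)).topologicalClosure with hH₁
    haveI : CompleteSpace H₁ := (Submodule.isClosed_topologicalClosure _).completeSpace_coe
    set z₀ : K := (H₁.orthogonalProjectionOnto z : K) with hz₀def
    set k : K := z - z₀ with hk
    have hzdecomp : z = z₀ + k := by rw [hk]; abel
    have hkmem : k ∈ H₁ᗮ := Submodule.sub_starProjection_mem_orthogonal (K := H₁) z
    have horth : ∀ u ∈ H₁, ⟪u, k⟫ = 0 := (Submodule.mem_orthogonal H₁ k).mp hkmem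
    have hrange_sub : ∀ w : K, R w ∈ H₁ := fun w =>
      Submodule.le_topologicalClosure _ (LinearMap.mem_range_self _ w)
    have hz₀mem : z₀ ∈ H₁ := by rw [hz₀def]; exact SetLike.coe_mem _
    have hRk : R k = 0 := by
      rw [← inner_self_eq_zero (𝕜 := ℂ) (x := R k), ← krein14_sa_inner hRsa (R k) k]
      exact horth _ (hrange_sub _)
    have hSk : S k = 0 := by rw [hSx, hRk, map_zero, map_zero]
    have hSz : S z = S z₀ := by rw [hzdecomp, map_add, hSk, add_zero]
    have hSz₀H : S z₀ ∈ H₁ := by rw [hSx]; exact hrange_sub _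
    have hnum : ⟪S z, z⟫ = ⟪S z₀, z₀⟫ := by
      rw [hSz]
      conv_lhs => rw [hzdecomp]
      rw [inner_add_right, horth _ hSz₀H, add_zero]
    have hz₀k : ⟪z₀, k⟫ = 0 := horth _ hz₀mem
    have hnorm : ‖z₀‖^2 + ‖k‖^2 = 1 := by
      have h1 : ‖z‖^2 = ‖z₀‖^2 + ‖k‖^2 := by
        conv_lhs => rw [hzdecomp]
        simpa [pow_two] using norm_add_sq_eq_norm_sq_add_norm_sq_of_inner_eq_zero _ _ hz₀k
      rw [hz1] at h1
      rw [← h1]; norm_num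
    have hkb : -t * ‖k‖ ≤ δ := by
      have hdecomp : S z - t • z = (S z₀ - t • z₀) + (-t) • k := by
        rw [hSz]
        conv_lhs => rw [hzdecomp]
        rw [smul_add, neg_smul]
        abel
      have hmemH : S z₀ - t • z₀ ∈ H₁ := by
        refine Submodule.sub_mem _ hSz₀H ?_
        rw [krein14_real_smul]
        exact Submodule.smul_mem _ _ hz₀mem
      have hortho2 : ⟪S z₀ - t • z₀, (-t) • k⟫ = 0 := by
        rw [krein14_inner_real_smul_right, horth _ hmemH, mul_zero]
      have hpyth : ‖S z - t • z‖^2 = ‖S z₀ - t • z₀‖^2 + ‖(-t) • k‖^2 := by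
        rw [hdecomp]
        simpa [pow_two] using norm_add_sq_eq_norm_sq_add_norm_sq_of_inner_eq_zero _ _ hortho2
      have h5 : ‖(-t) • k‖^2 ≤ δ^2 := by
        nlinarith [sq_nonneg ‖S z₀ - t • z₀‖, hz2, norm_nonneg (S z - t • z), hδpos]
      have h6 : ‖(-t) • k‖ = -t * ‖k‖ := by
        rw [norm_smul, Real.norm_eq_abs, abs_of_pos hτ]
      nlinarith [norm_nonneg k, hτ, hδpos]
    have hk1 : ‖k‖ ≤ δ / (-t) := by
      rw [le_div_iff₀ hτ]; linarith
    have hk2 : ‖k‖^2 ≤ 1/4 := by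
      have h7 : δ / (-t) ≤ 1/2 := by rw [div_le_iff₀ hτ]; linarith
      nlinarith [norm_nonneg k]
    have hD : 3/4 ≤ ‖z₀‖^2 := by nlinarith
    have hz₀ne : z₀ ≠ 0 := by
      intro h
      rw [h, norm_zero] at hD; norm_num at hD
    have hNt : |(⟪S z, z⟫).re - t| ≤ δ := by
      have h3 : ⟪z, z⟫ = ((1:ℝ) : ℂ) := by
        rw [inner_self_eq_norm_sq_to_K, hz1]; norm_num
      have h1 : (⟪S z, z⟫).re - t = (⟪S z - t • z, z⟫).re := by
        rw [inner_sub_left, krein14_inner_real_smul_left, Complex.sub_re, h3,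
          krein14_re_ofReal_mul]
        norm_num
      rw [h1]
      calc |(⟪S z - t • z, z⟫).re| ≤ ‖⟪S z - t • z, z⟫‖ := by
            exact Complex.abs_re_le_norm _
      _ ≤ ‖S z - t • z‖ * ‖z‖ := norm_inner_le_norm _ _
      _ ≤ δ := by rw [hz1, mul_one]; exact hz2.le
    have hGz₀ : |G z₀ - t| ≤ 2 * δ := by
      have hDpos : (0:ℝ) < ‖z₀‖^2 := by linarith
      have hGz : G z₀ = (⟪S z, z⟫).re / ‖z₀‖^2 := by rw [hG, hnum]
      have h7 : (-t) * ‖k‖^2 ≤ δ / 2 := by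
        have h71 : (-t) * ‖k‖^2 = ((-t) * ‖k‖) * ‖k‖ := by ring
        have h72 : ((-t) * ‖k‖) * ‖k‖ ≤ δ * (δ / (-t)) := by
          apply mul_le_mul hkb hk1 (norm_nonneg k) hδpos.le
        have h73 : δ * (δ / (-t)) ≤ δ * (1/2) := by
          apply mul_le_mul_of_nonneg_left _ hδpos.le
          rw [div_le_iff₀ hτ]; linarith
        linarith
      have h8 : |(⟪S z, z⟫).re - t * ‖z₀‖^2| ≤ 2*δ*‖z₀‖^2 := by
        rw [abs_le] at hNt ⊢
        constructor
        · nlinarith [hNt.1]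
        · nlinarith [hNt.2]
      have h9 : (⟪S z, z⟫).re / ‖z₀‖^2 - t = ((⟪S z, z⟫).re - t * ‖z₀‖^2) / ‖z₀‖^2 := by
        field_simp
      rw [hGz, h9, abs_div, abs_of_pos hDpos, div_le_iff₀ hDpos]
      calc |(⟪S z, z⟫).re - t * ‖z₀‖^2| ≤ 2*δ*‖z₀‖^2 := h8
      _ = 2*δ*‖z₀‖^2 := rfl
    have hcA : ContinuousAt G z₀ := hGcont z₀ hz₀ne
    have hU : {y : K | |G y - G z₀| < ε/4 ∧ y ≠ 0} ∈ nhds z₀ := by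
      have h1 : {y : K | |G y - G z₀| < ε/4} ∈ nhds z₀ := by
        have h11 := hcA (Metric.ball_mem_nhds (G z₀) (by linarith : (0:ℝ) < ε/4))
        refine Filter.mem_of_superset h11 ?_
        intro y hy
        simpa [Real.dist_eq] using hy
      have h2 : {y : K | y ≠ 0} ∈ nhds z₀ := IsOpen.mem_nhds isOpen_ne hz₀ne
      exact Filter.inter_mem h1 h2
    have hz₀clos : z₀ ∈ closure (Set.range (R : K → K)) := by
      have h2 : (H₁ : Set K) = closure (Set.range (R : K → K)) := by
        rw [hH₁, Submodule.topologicalClosure_coe]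
        congr 1
      exact h2 ▸ hz₀mem
    obtain ⟨y, hyU, hyR⟩ := mem_closure_iff_nhds.mp hz₀clos _ hU
    obtain ⟨x', hx'⟩ := hyR
    refine ⟨G y, (hWiff _).mpr ⟨x', ?_, ?_⟩, ?_⟩
    · rw [hx']; exact hyU.2
    · rw [hx']
    · calc |G y - t| ≤ |G y - G z₀| + |G z₀ - t| := abs_sub_le _ _ _
      _ < ε/4 + 2*δ := by linarith [hyU.1, hGz₀]
      _ ≤ ε/4 + ε/4 := by linarith
      _ < ε := by linarith
  have hIoo : ∀ r ∈ Set.Ioo ν μ, r ∈ kreinWco J A := by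
    intro r hr
    obtain ⟨t₁, ht₁, ht₁lt⟩ := exists_lt_of_csInf_lt ⟨t₀, ht₀⟩ hr.1
    obtain ⟨t₂, ht₂, ht₂gt⟩ := exists_lt_of_lt_csSup ⟨t₀, ht₀⟩ hr.2
    obtain ⟨h₁S, h₁neg⟩ := (hSigS t₁).mp ht₁
    obtain ⟨h₂S, h₂neg⟩ := (hSigS t₂).mp ht₂
    obtain ⟨a, haW, hacl⟩ := happrox t₁ h₁S h₁neg (r - t₁) (by linarith)
    obtain ⟨b, hbW, hbcl⟩ := happrox t₂ h₂S h₂neg (t₂ - r) (by linarith)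
    have ha_lt : a < r := by
      have := abs_lt.mp hacl; linarith [this.2]
    have hb_gt : r < b := by
      have := abs_lt.mp hbcl; linarith [this.1]
    obtain ⟨x₁, hx₁ne, hx₁⟩ := (hWiff a).mp haW
    obtain ⟨x₂, hx₂ne, hx₂⟩ := (hWiff b).mp hbW
    by_cases hdep : ∃ c : ℂ, R x₂ = c • R x₁
    · exfalso
      obtain ⟨c, hc⟩ := hdep
      have hcne : c ≠ 0 := by
        rintro rfl; rw [zero_smul] at hc; exact hx₂ne hc
      have hGeq : G (R x₂) = G (R x₁) := by
        rw [hG, hG, hc, map_smul, inner_smul_left, inner_smul_right, norm_smul]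
        have h1 : (starRingEnd ℂ) c * (c * ⟪S (R x₁), R x₁⟫) =
            ((‖c‖ ^ 2 : ℝ) : ℂ) * ⟪S (R x₁), R x₁⟫ := by
          rw [← mul_assoc, Complex.conj_mul']
          norm_cast
        rw [h1, krein14_re_ofReal_mul]
        have h2 : ‖c‖ = ‖c‖ := rfl
        rw [h2]
        have h3 : ‖c‖ ≠ 0 := ne_of_gt (norm_pos_iff.mpr hcne)
        rw [mul_pow, mul_div_mul_left _ _ (pow_ne_zero 2 h3)]
      rw [← hx₁, ← hx₂] at hGeq
      linarith
    · push_neg at hdep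
      set w : ℝ → K := fun s => ((1 - s : ℝ) : ℂ) • R x₁ + ((s : ℝ) : ℂ) • R x₂ with hwdef
      have hwval : ∀ s : ℝ, w s = ((1 - s : ℝ) : ℂ) • R x₁ + ((s : ℝ) : ℂ) • R x₂ :=
        fun _ => rfl
      have hwne : ∀ s : ℝ, w s ≠ 0 := by
        intro s h
        rw [hwval] at h
        rcases eq_or_ne s 0 with rfl | hs
        · simp at h
          exact hx₁ne h
        · have hsC : ((s : ℝ) : ℂ) ≠ 0 := by exact_mod_cast hs
          apply hdep (-(((1 - s : ℝ) : ℂ)) / ((s:ℝ):ℂ))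
          have h2 : ((s:ℝ):ℂ) • R x₂ = -(((1 - s : ℝ):ℂ) • R x₁) :=
            eq_neg_of_add_eq_zero_right h
          have h3 := congrArg (fun v : K => (((s:ℝ):ℂ))⁻¹ • v) h2
          simp only [smul_smul, smul_neg] at h3
          rw [inv_mul_cancel₀ hsC, one_smul] at h3
          rw [h3, ← neg_smul]
          congr 1
          field_simp
      set g : ℝ → ℝ := fun s => (⟪S (w s), w s⟫).re - r * ‖w s‖^2 with hgdef
      have hgval : ∀ s : ℝ, g s = (⟪S (w s), w s⟫).re - r * ‖w s‖^2 := fun _ => rfl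
      have hwcont : Continuous w := by
        apply Continuous.add
        · exact (Complex.continuous_ofReal.comp (continuous_const.sub continuous_id)).smul
            continuous_const
        · exact (Complex.continuous_ofReal.comp continuous_id).smul continuous_const
      have hgcont : Continuous g := by
        apply Continuous.sub
        · exact Complex.continuous_re.comp
            (continuous_inner.comp ((S.continuous.comp hwcont).prodMk hwcont))
        · exact continuous_const.mul ((hwcont.norm).pow 2)
      have hw0 : w 0 = R x₁ := by rw [hwval]; norm_num
      have hw1 : w 1 = R x₂ := by rw [hwval]; norm_num
      have hden1 : (0:ℝ) < ‖R x₁‖^2 := pow_pos (norm_pos_iff.mpr hx₁ne) 2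
      have hden2 : (0:ℝ) < ‖R x₂‖^2 := pow_pos (norm_pos_iff.mpr hx₂ne) 2
      have hnum1 : (⟪S (R x₁), R x₁⟫).re = a * ‖R x₁‖^2 := by
        rw [hx₁, hG]; field_simp
      have hnum2 : (⟪S (R x₂), R x₂⟫).re = b * ‖R x₂‖^2 := by
        rw [hx₂, hG]; field_simp
      have hg0 : g 0 < 0 := by
        rw [hgval, hw0, hnum1]
        nlinarith
      have hg1 : 0 < g 1 := by
        rw [hgval, hw1, hnum2]
        nlinarith
      obtain ⟨s₀, hs₀mem, hs₀⟩ := intermediate_value_Icc (by norm_num : (0:ℝ) ≤ 1)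
        hgcont.continuousOn ⟨hg0.le, hg1.le⟩
      have hw₀ne := hwne s₀
      have hdenw : (0:ℝ) < ‖w s₀‖^2 := pow_pos (norm_pos_iff.mpr hw₀ne) 2
      have hr_eq : r = G (w s₀) := by
        have h1 : (⟪S (w s₀), w s₀⟫).re = r * ‖w s₀‖^2 := by
          have h2 := hs₀
          rw [hgval] at h2
          linarith
        rw [hG, h1]
        field_simp
      have hRx' : R (((1 - s₀ : ℝ) : ℂ) • x₁ + ((s₀ : ℝ) : ℂ) • x₂) = w s₀ := by
        rw [map_add, map_smul, map_smul, hwval]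
      exact (hWiff r).mpr ⟨((1 - s₀ : ℝ) : ℂ) • x₁ + ((s₀ : ℝ) : ℂ) • x₂,
        by rw [hRx']; exact hw₀ne, by rw [hRx']; exact hr_eq⟩
  ext r
  simp only [Set.mem_diff, Set.mem_insert_iff, Set.mem_singleton_iff, Set.mem_Ioo]
  constructor
  · rintro ⟨hrW, hrne⟩
    push_neg at hrne
    exact ⟨lt_of_le_of_ne (hlower r hrW) (Ne.symm hrne.1),
      lt_of_le_of_ne (hupper r hrW) hrne.2⟩
  · rintro ⟨h1, h2⟩
    refine ⟨hIoo r ⟨h1, h2⟩, ?_⟩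
    rintro (h | h)
    · exact (ne_of_gt h1) h
    · exact (ne_of_lt h2) h
end

section
/- Let A ≠ 0 be a non-negative operator in the Krein space K, let K be indefinite, and assume that the range of A is indefinite. Then W_co(A) \ {ν₋, ν₊} = (ν₋, ν₊) (the open interval from ν₋ to ν₊). -/
open Set Filter Topology
open Pointwise ContinuousLinearMap

set_option maxHeartbeats 2000000

variable {K : Type*} [NormedAddCommGroup K] [InnerProductSpace ℂ K] [CompleteSpace K]

lemma aux_alg_sa (t : ℝ) : IsSelfAdjoint (algebraMap ℝ (K →L[ℂ] K) t) :=
  IsSelfAdjoint.algebraMap _ (.all t)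

lemma aux_alg_apply (t : ℝ) (y : K) : (algebraMap ℝ (K →L[ℂ] K) t) y = (t : ℂ) • y := by
  rw [IsScalarTower.algebraMap_apply ℝ ℂ (K →L[ℂ] K), Algebra.algebraMap_eq_smul_one,
    ContinuousLinearMap.smul_apply, ContinuousLinearMap.one_apply, Complex.coe_algebraMap]

lemma aux_specLe (B : K →L[ℂ] K) (hB : IsSelfAdjoint B) (t : ℝ) :
    (∀ y : K, (inner ℂ (B y) y : ℂ).re ≤ t * ‖y‖ ^ 2) ↔ ∀ l ∈ spectrum ℝ B, l ≤ t := by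
  set C : K →L[ℂ] K := algebraMap ℝ (K →L[ℂ] K) t - B with hCdef
  have hCsa : IsSelfAdjoint C := (aux_alg_sa t).sub hB
  have happ : ∀ y : K, (inner ℂ (C y) y : ℂ).re = t * ‖y‖ ^ 2 - (inner ℂ (B y) y : ℂ).re := by
    intro y
    have h1 : C y = (t : ℂ) • y - B y := by
      rw [hCdef, ContinuousLinearMap.sub_apply, aux_alg_apply]
    rw [h1, inner_sub_left, inner_smul_left, inner_self_eq_norm_sq_to_K, Complex.sub_re,
      Complex.conj_ofReal]
    simp only [Complex.mul_re, Complex.ofReal_re, Complex.ofReal_im, zero_mul, sub_zero]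
    norm_cast
  have h2 : (∀ y : K, (inner ℂ (B y) y : ℂ).re ≤ t * ‖y‖ ^ 2) ↔ 0 ≤ C := by
    rw [nonneg_iff_isPositive, isPositive_def']
    constructor
    · intro h
      refine ⟨hCsa, fun y => ?_⟩
      rw [reApplyInnerSelf_apply]
      have := happ y
      simp only [RCLike.re_to_complex]
      rw [this]
      linarith [h y]
    · intro h y
      have := h.2 y
      rw [reApplyInnerSelf_apply] at this
      simp only [RCLike.re_to_complex] at this
      rw [happ y] at this
      linarith
  rw [h2, StarOrderedRing.nonneg_iff_spectrum_nonneg (R := ℝ) C hCsa]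
  have h3 : spectrum ℝ C = {t} - spectrum ℝ B := (spectrum.singleton_sub_eq B t).symm
  rw [h3]
  constructor
  · intro h l hl
    have := h (t - l) ⟨t, rfl, l, hl, rfl⟩
    linarith
  · rintro h μ ⟨a, ha, l, hl, rfl⟩
    simp only [Set.mem_singleton_iff] at ha
    subst ha
    have := h l hl
    show (0:ℝ) ≤ a - l
    linarith

lemma aux_specGe (B : K →L[ℂ] K) (hB : IsSelfAdjoint B) (t : ℝ) :
    (∀ y : K, t * ‖y‖ ^ 2 ≤ (inner ℂ (B y) y : ℂ).re) ↔ ∀ l ∈ spectrum ℝ B, t ≤ l := by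
  have key := aux_specLe (-B) hB.neg (-t)
  simp only [ContinuousLinearMap.neg_apply, inner_neg_left, Complex.neg_re] at key
  constructor
  · intro h l hl
    have h2 := key.mp (fun y => by linarith [h y])
    have hneg : -l ∈ spectrum ℝ (-B) := by
      rw [← spectrum.neg_eq]
      exact Set.neg_mem_neg.mpr hl
    linarith [h2 (-l) hneg]
  · intro h y
    have h2 : ∀ l ∈ spectrum ℝ (-B), l ≤ -t := by
      intro l hl
      rw [← spectrum.neg_eq] at hl
      rcases Set.mem_neg.mp hl with hm
      linarith [h (-l) hm]
    linarith [key.mpr h2 y]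

lemma aux_approx (S B : K →L[ℂ] K) (hS : (S : K →ₗ[ℂ] K).IsSymmetric)
    (hB0 : ∀ w : K, S w = 0 → B w = 0) (hBrange : ∀ z : K, ∃ x, S x = B z)
    (t : ℝ) (ht : 0 ≤ t) (y : K) (hy : t * ‖y‖ ^ 2 < (inner ℂ (B y) y : ℂ).re) :
    ∃ x : K, S x ≠ 0 ∧ t * ‖S x‖ ^ 2 < (inner ℂ (B (S x)) (S x) : ℂ).re := by
  set M : Submodule ℂ K := (LinearMap.range (S : K →ₗ[ℂ] K)).topologicalClosure with hM
  haveI : CompleteSpace M := (Submodule.isClosed_topologicalClosure _).completeSpace_coe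
  set y' : K := (M.orthogonalProjectionOnto y : K) with hy'def
  have hrange_le : LinearMap.range (S : K →ₗ[ℂ] K) ≤ M := Submodule.le_topologicalClosure _
  have hw : y - y' ∈ Mᗮ := M.sub_starProjection_mem_orthogonal y
  have hSperp : ∀ w ∈ Mᗮ, S w = 0 := by
    intro w hwmem
    have h1 : inner ℂ (S (S w)) w = (0 : ℂ) :=
      (Submodule.mem_orthogonal M w).mp hwmem _ (hrange_le ⟨S w, rfl⟩)
    have h2 : inner ℂ (S w) (S w) = (0 : ℂ) := by
      have := hS (S w) w
      simp only [ContinuousLinearMap.coe_coe] at this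
      rw [← this]; exact h1
    exact inner_self_eq_zero.mp h2
  have hBw : B (y - y') = 0 := hB0 _ (hSperp _ hw)
  have hBy'M : B y' ∈ M := hrange_le (by obtain ⟨x, hx⟩ := hBrange y'; exact ⟨x, hx⟩)
  have hBy : B y = B y' := sub_eq_zero.mp (by rw [← map_sub]; exact hBw)
  have horth : inner ℂ (B y') (y - y') = (0 : ℂ) :=
    (Submodule.mem_orthogonal M (y - y')).mp hw (B y') hBy'M
  have hform : (inner ℂ (B y') y' : ℂ) = inner ℂ (B y) y := by
    conv_rhs => rw [hBy, show y = y' + (y - y') from by abel]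
    rw [inner_add_right, horth, add_zero]
  have hnorm : ‖y'‖ ≤ ‖y‖ := by
    have h1 := (M.orthogonalProjectionOnto).le_opNorm y
    have h2 : ‖M.orthogonalProjectionOnto‖ * ‖y‖ ≤ 1 * ‖y‖ :=
      mul_le_mul_of_nonneg_right (M.orthogonalProjectionOnto_norm_le) (norm_nonneg y)
    have h3 : ‖(M.orthogonalProjectionOnto y : M)‖ = ‖y'‖ := rfl
    rw [h3] at h1
    linarith
  have hy'form : t * ‖y'‖ ^ 2 < (inner ℂ (B y') y' : ℂ).re := by
    rw [hform]
    refine lt_of_le_of_lt ?_ hy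
    exact mul_le_mul_of_nonneg_left (pow_le_pow_left₀ (norm_nonneg _) hnorm 2) ht
  have hy'mem : y' ∈ closure ((LinearMap.range (S : K →ₗ[ℂ] K) : Submodule ℂ K) : Set K) := by
    have h2 : y' ∈ M := SetLike.coe_mem _
    rw [← Submodule.topologicalClosure_coe]
    exact h2
  have hg : Continuous fun z : K => (inner ℂ (B z) z : ℂ).re - t * ‖z‖ ^ 2 := by
    apply Continuous.sub
    · exact Complex.continuous_re.comp (Continuous.inner B.continuous continuous_id)
    · exact continuous_const.mul (continuous_norm.pow 2)
  have hopen : IsOpen {z : K | 0 < (inner ℂ (B z) z : ℂ).re - t * ‖z‖ ^ 2} :=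
    isOpen_lt continuous_const hg
  have hnhds : {z : K | 0 < (inner ℂ (B z) z : ℂ).re - t * ‖z‖ ^ 2} ∈ nhds y' :=
    hopen.mem_nhds (by simp only [Set.mem_setOf_eq]; linarith)
  rcases mem_closure_iff_nhds.mp hy'mem _ hnhds with ⟨z, hz1, hz2⟩
  simp only [Set.mem_setOf_eq] at hz1
  obtain ⟨x, hx : S x = z⟩ := hz2
  refine ⟨x, ?_, ?_⟩
  · intro h0
    rw [hx] at h0
    rw [h0] at hz1
    simp at hz1
  · rw [hx]
    linarith

/-- Theorem (iii) on the co-numerical range: if `ran A` is indefinite, then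
`W_co(A) \ {ν₋, ν₊} = (ν₋, ν₊)`.  (Here `sInf ∅ = sSup ∅ = 0` in `ℝ`, matching the
convention `ν₋ = 0`, `ν₊ = 0` for empty negative/positive spectrum.) -/
theorem stmt_15 (J A : K →L[ℂ] K) (hJ : IsFundamentalSymmetry J)
    (hA : IsKreinNonneg J A) (hA0 : A ≠ 0) (hind : KreinIndefinite J)
    (hran : (∃ u ∈ Set.range (A : K → K), u ≠ 0 ∧ kreinRe J u u ≤ 0) ∧
      (∃ v ∈ Set.range (A : K → K), v ≠ 0 ∧ 0 ≤ kreinRe J v v)) :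
    kreinWco J A \ {sInf (sigmaR A ∩ Set.Iio 0), sSup (sigmaR A ∩ Set.Ioi 0)} =
      Set.Ioo (sInf (sigmaR A ∩ Set.Iio 0)) (sSup (sigmaR A ∩ Set.Ioi 0)) := by
  obtain ⟨hJsa, hJ2⟩ := hJ
  obtain ⟨⟨u, ⟨xu, hxu⟩, hu0, huneg⟩, ⟨v, ⟨xv, hxv⟩, hv0, hvpos⟩⟩ := hran
  haveI : Nontrivial K := ⟨⟨u, 0, hu0⟩⟩
  set T : K →L[ℂ] K := J ∘L A with hTdef
  have hTsa : IsSelfAdjoint T := hA.1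
  have hT0 : (0 : K →L[ℂ] K) ≤ T := by
    rw [ContinuousLinearMap.nonneg_iff_isPositive, ContinuousLinearMap.isPositive_def']
    refine ⟨hTsa, fun x => ?_⟩
    have := hA.2 x
    rw [reApplyInnerSelf_apply]
    simpa [kreinRe, RCLike.re_to_complex, hTdef] using this
  set S : K →L[ℂ] K := CFC.sqrt T with hSdef
  have hS0 : (0 : K →L[ℂ] K) ≤ S := CFC.sqrt_nonneg T
  have hSsa : IsSelfAdjoint S := hS0.isSelfAdjoint
  have hSS : S * S = T := CFC.sqrt_mul_sqrt_self T hT0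
  have hSsymm' : (S : K →ₗ[ℂ] K).IsSymmetric := isSelfAdjoint_iff_isSymmetric.mp hSsa
  have hSsymm : ∀ x y : K, (inner ℂ (S x) y : ℂ) = inner ℂ x (S y) := by
    intro x y
    have := hSsymm' x y
    simpa using this
  have hJJ : ∀ z : K, J (J z) = z := by
    intro z
    have : (J ∘L J) z = (1 : K →L[ℂ] K) z := by rw [hJ2]
    simpa using this
  have hAJT : A = J ∘L T := by
    ext z
    rw [ContinuousLinearMap.comp_apply, hTdef, ContinuousLinearMap.comp_apply, hJJ]
  have hTapp : ∀ x : K, T x = S (S x) := by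
    intro x
    rw [← hSS]
    rfl
  have hJAx : ∀ x : K, J (A x) = T x := fun x => rfl
  have hden : ∀ x : K, kreinRe J (A x) x = ‖S x‖ ^ 2 := by
    intro x
    show (inner ℂ (J (A x)) x : ℂ).re = ‖S x‖ ^ 2
    rw [hJAx, hTapp, hSsymm, inner_self_eq_norm_sq_to_K]
    norm_cast
  set B : K →L[ℂ] K := S * (J * S) with hBdef
  have hBapp : ∀ z : K, B z = S (J (S z)) := fun z => rfl
  have hBsa : IsSelfAdjoint B := by
    rw [IsSelfAdjoint, hBdef, star_mul, star_mul, hSsa.star_eq, hJsa.star_eq, mul_assoc]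
  have hnum : ∀ x : K, kreinRe J (A x) (A x) = (inner ℂ (B (S x)) (S x) : ℂ).re := by
    intro x
    show (inner ℂ (J (A x)) (A x) : ℂ).re = _
    have h2 : A x = J (T x) := by rw [hAJT]; rfl
    rw [hJAx, h2, hTapp, hSsymm (S x) (J (S (S x))), ← hBapp, ← inner_conj_symm,
      Complex.conj_re]
  have hB0 : ∀ w : K, S w = 0 → B w = 0 := by
    intro w hw
    rw [hBapp, hw, map_zero, map_zero]
  have hBrange : ∀ z : K, ∃ x, S x = B z := fun z => ⟨J (S z), rfl⟩
  -- spectra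
  have hA_mul : A = (J * S) * S := by
    rw [hAJT, ← hSS, show J ∘L (S * S) = J * (S * S) from rfl, ← mul_assoc]
  have hspec : ∀ l : ℝ, l ≠ 0 → (l ∈ sigmaR A ↔ l ∈ spectrum ℝ B) := by
    intro l hl
    have hlc : (l : ℂ) ≠ 0 := Complex.ofReal_ne_zero.mpr hl
    have hswap := spectrum.nonzero_mul_comm (𝕜 := ℂ) (J * S) S
    rw [← hA_mul, ← hBdef] at hswap
    have hc : (l : ℂ) ∈ spectrum ℂ A ↔ (l : ℂ) ∈ spectrum ℂ B := by
      constructor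
      · intro h
        exact ((hswap ▸ (⟨h, hlc⟩ : (l:ℂ) ∈ spectrum ℂ A \ {0})) :
          (l:ℂ) ∈ spectrum ℂ B \ {0}).1
      · intro h
        exact ((hswap ▸ (⟨h, hlc⟩ : (l:ℂ) ∈ spectrum ℂ B \ {0})) :
          (l:ℂ) ∈ spectrum ℂ A \ {0}).1
    have e1 : ∀ X : K →L[ℂ] K, ((l : ℂ) ∈ spectrum ℂ X ↔ l ∈ spectrum ℝ X) := by
      intro X
      rw [show ((l : ℂ)) = algebraMap ℝ ℂ l from rfl]
      exact spectrum.algebraMap_mem_iff (S := ℂ) (R := ℝ) (A := K →L[ℂ] K)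
    show (l : ℂ) ∈ spectrum ℂ A ↔ _
    rw [hc, e1 B]
  -- boundedness of the spectrum
  have hbddA : ∀ l ∈ sigmaR A, |l| ≤ ‖A‖ := by
    intro l hl
    have : ‖(l : ℂ)‖ ≤ ‖A‖ := spectrum.norm_le_norm_of_mem hl
    simpa using this
  have hbddp : BddAbove (sigmaR A ∩ Set.Ioi 0) :=
    ⟨‖A‖, fun l hl => (le_abs_self l).trans (hbddA l hl.1)⟩
  have hbddm : BddBelow (sigmaR A ∩ Set.Iio 0) :=
    ⟨-‖A‖, fun l hl => neg_abs_le l |>.trans' (by linarith [hbddA l hl.1])⟩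
  set νp := sSup (sigmaR A ∩ Set.Ioi 0) with hνp
  set νm := sInf (sigmaR A ∩ Set.Iio 0) with hνm
  have hνp0 : 0 ≤ νp := by
    rcases (sigmaR A ∩ Set.Ioi 0).eq_empty_or_nonempty with he | ⟨l, hl⟩
    · rw [hνp, he, Real.sSup_empty]
    · exact le_trans (le_of_lt hl.2) (le_csSup hbddp hl)
  have hνm0 : νm ≤ 0 := by
    rcases (sigmaR A ∩ Set.Iio 0).eq_empty_or_nonempty with he | ⟨l, hl⟩
    · rw [hνm, he, Real.sInf_empty]
    · exact le_trans (csInf_le hbddm hl) (le_of_lt hl.2)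
  have hBle : ∀ l ∈ spectrum ℝ B, l ≤ νp := by
    intro l hl
    rcases le_or_gt l 0 with h | h
    · exact h.trans hνp0
    · exact le_csSup hbddp ⟨(hspec l h.ne').mpr hl, h⟩
  have hBge : ∀ l ∈ spectrum ℝ B, νm ≤ l := by
    intro l hl
    rcases le_or_gt 0 l with h | h
    · exact hνm0.trans h
    · exact csInf_le hbddm ⟨(hspec l h.ne).mpr hl, h⟩
  have hub : ∀ y : K, (inner ℂ (B y) y : ℂ).re ≤ νp * ‖y‖ ^ 2 := (aux_specLe B hBsa νp).mpr hBle
  have hlb : ∀ y : K, νm * ‖y‖ ^ 2 ≤ (inner ℂ (B y) y : ℂ).re := (aux_specGe B hBsa νm).mpr hBge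
  ext r
  simp only [Set.mem_diff, Set.mem_insert_iff, Set.mem_singleton_iff, Set.mem_Ioo, not_or]
  constructor
  · rintro ⟨⟨x, hx0, hxr⟩, hne1, hne2⟩
    rw [hnum, hden] at hxr
    rw [hden] at hx0
    have hSx : 0 < ‖S x‖ ^ 2 := lt_of_le_of_ne (by positivity) (Ne.symm hx0)
    have h1 : r ≤ νp := by
      rw [hxr, div_le_iff₀ hSx]
      exact hub (S x)
    have h2 : νm ≤ r := by
      rw [hxr, le_div_iff₀ hSx]
      exact hlb (S x)
    exact ⟨lt_of_le_of_ne h2 (Ne.symm hne1), lt_of_le_of_ne h1 hne2⟩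
  · rintro ⟨h1, h2⟩
    -- find a vector in the range where the quotient is above r
    have hx2 : ∃ x : K, S x ≠ 0 ∧ r * ‖S x‖ ^ 2 < (inner ℂ (B (S x)) (S x) : ℂ).re := by
      rcases lt_or_ge r 0 with hr | hr
      · refine ⟨xv, ?_, ?_⟩
        · intro h0
          apply hv0
          rw [← hxv, hAJT, ContinuousLinearMap.comp_apply, hTapp, h0, map_zero, map_zero]
        · have hvv : (0 : ℝ) ≤ (inner ℂ (B (S xv)) (S xv) : ℂ).re := by
            rw [← hnum xv, hxv]
            exact hvpos
          have hSxv : S xv ≠ 0 := by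
            intro h0
            apply hv0
            rw [← hxv, hAJT, ContinuousLinearMap.comp_apply, hTapp, h0, map_zero, map_zero]
          have : 0 < ‖S xv‖ ^ 2 := pow_pos (norm_pos_iff.mpr hSxv) 2
          nlinarith
      · have hne : (sigmaR A ∩ Set.Ioi 0).Nonempty := by
          by_contra hemp
          rw [Set.not_nonempty_iff_eq_empty] at hemp
          rw [hνp, hemp, Real.sSup_empty] at h2
          linarith
        obtain ⟨l, hl, hrl⟩ := exists_lt_of_lt_csSup hne h2
        have hlB : l ∈ spectrum ℝ B := (hspec l (ne_of_gt hl.2)).mp hl.1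
        have hnot : ¬∀ y : K, (inner ℂ (B y) y : ℂ).re ≤ r * ‖y‖ ^ 2 := by
          intro hall
          exact absurd ((aux_specLe B hBsa r).mp hall l hlB) (not_le.mpr hrl)
        push_neg at hnot
        obtain ⟨y, hy⟩ := hnot
        exact aux_approx S B hSsymm' hB0 hBrange r hr y hy
    have hx1 : ∃ x : K, S x ≠ 0 ∧ (inner ℂ (B (S x)) (S x) : ℂ).re < r * ‖S x‖ ^ 2 := by
      rcases le_or_gt r 0 with hr | hr
      · have hne : (sigmaR A ∩ Set.Iio 0).Nonempty := by
          by_contra hemp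
          rw [Set.not_nonempty_iff_eq_empty] at hemp
          rw [hνm, hemp, Real.sInf_empty] at h1
          linarith
        obtain ⟨l, hl, hrl⟩ := exists_lt_of_csInf_lt hne h1
        have hlB : l ∈ spectrum ℝ B := (hspec l (ne_of_lt hl.2)).mp hl.1
        have hnot : ¬∀ y : K, r * ‖y‖ ^ 2 ≤ (inner ℂ (B y) y : ℂ).re := by
          intro hall
          exact absurd ((aux_specGe B hBsa r).mp hall l hlB) (not_le.mpr hrl)
        push_neg at hnot
        obtain ⟨y, hy⟩ := hnot
        have h' := aux_approx S (-B) hSsymm'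
          (fun w hw => by rw [ContinuousLinearMap.neg_apply, hB0 w hw, neg_zero])
          (fun z => by
            obtain ⟨x, hx⟩ := hBrange z
            exact ⟨-x, by rw [map_neg, hx, ContinuousLinearMap.neg_apply]⟩)
          (-r) (by linarith) y
          (by
            simp only [ContinuousLinearMap.neg_apply, inner_neg_left, Complex.neg_re]
            linarith)
        obtain ⟨x, hx0, hxlt⟩ := h'
        refine ⟨x, hx0, ?_⟩
        simp only [ContinuousLinearMap.neg_apply, inner_neg_left, Complex.neg_re] at hxlt
        linarith
      · refine ⟨xu, ?_, ?_⟩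
        · intro h0
          apply hu0
          rw [← hxu, hAJT, ContinuousLinearMap.comp_apply, hTapp, h0, map_zero, map_zero]
        · have huu : (inner ℂ (B (S xu)) (S xu) : ℂ).re ≤ 0 := by
            rw [← hnum xu, hxu]
            exact huneg
          have hSxu : S xu ≠ 0 := by
            intro h0
            apply hu0
            rw [← hxu, hAJT, ContinuousLinearMap.comp_apply, hTapp, h0, map_zero, map_zero]
          have : 0 < ‖S xu‖ ^ 2 := pow_pos (norm_pos_iff.mpr hSxu) 2
          nlinarith
    obtain ⟨x₁, hx1ne, hx1lt⟩ := hx1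
    obtain ⟨x₂, hx2ne, hx2lt⟩ := hx2
    -- intermediate value argument along the segment
    set g : K → ℝ := fun z => (inner ℂ (B z) z : ℂ).re - r * ‖z‖ ^ 2 with hgdef
    have hgc : Continuous g := by
      apply Continuous.sub
      · exact Complex.continuous_re.comp (Continuous.inner B.continuous continuous_id)
      · exact continuous_const.mul (continuous_norm.pow 2)
    have hgsmul : ∀ (a : ℂ) (z : K), g (a • z) = Complex.normSq a * g z := by
      intro a z
      have h1 : (inner ℂ (B (a • z)) (a • z) : ℂ) = (Complex.normSq a : ℂ) * inner ℂ (B z) z := by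
        rw [map_smul, inner_smul_left, inner_smul_right, ← mul_assoc, mul_comm (starRingEnd ℂ a) a,
          Complex.mul_conj]
      have h2 : ‖a • z‖ ^ 2 = Complex.normSq a * ‖z‖ ^ 2 := by
        rw [norm_smul, mul_pow, Complex.sq_norm]
      simp only [hgdef, h1, h2, Complex.re_ofReal_mul]
      ring
    have hgz1 : g (S x₁) < 0 := by
      simp only [hgdef]
      linarith
    have hgz2 : 0 < g (S x₂) := by
      simp only [hgdef]
      linarith
    set c : ℝ → K := fun s => S x₁ + ((s : ℂ)) • (S x₂ - S x₁) with hcdef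
    have hcc : Continuous c := by
      apply continuous_const.add
      exact Complex.continuous_ofReal.smul continuous_const
    have hc0 : c 0 = S x₁ := by simp [hcdef]
    have hc1 : c 1 = S x₂ := by simp [hcdef]
    have hIV := intermediate_value_Icc (zero_le_one (α := ℝ)) (hgc.comp hcc).continuousOn
    have h0mem : (0 : ℝ) ∈ Set.Icc ((g ∘ c) 0) ((g ∘ c) 1) := by
      constructor
      · show g (c 0) ≤ 0
        rw [hc0]; exact le_of_lt hgz1
      · show 0 ≤ g (c 1)
        rw [hc1]; exact le_of_lt hgz2
    obtain ⟨s, _, hs⟩ := hIV h0mem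
    have hgs : g (c s) = 0 := hs
    have hcs0 : c s ≠ 0 := by
      intro h0
      rcases eq_or_ne s 0 with hs0 | hs0
      · rw [hs0, hc0] at h0
        exact hx1ne h0
      · have hsc : (s : ℂ) ≠ 0 := Complex.ofReal_ne_zero.mpr hs0
        simp only [hcdef] at h0
        rw [smul_sub] at h0
        have h2 : (s : ℂ) • S x₂ = (s : ℂ) • S x₁ - S x₁ := by
          rw [← sub_eq_zero, ← h0]; abel
        have hkey : S x₂ = ((s : ℂ)⁻¹ * ((s : ℂ) - 1)) • S x₁ := by
          have h3 := congrArg (fun z : K => (s : ℂ)⁻¹ • z) h2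
          simp only [smul_smul, inv_mul_cancel₀ hsc, one_smul, smul_sub] at h3
          rw [mul_sub, mul_one, inv_mul_cancel₀ hsc, sub_smul, one_smul]
          exact h3
        have hcontr : g (S x₂) ≤ 0 := by
          rw [hkey, hgsmul]
          exact mul_nonpos_of_nonneg_of_nonpos (Complex.normSq_nonneg _) (le_of_lt hgz1)
        linarith
    have hSxs : S (x₁ + (s : ℂ) • (x₂ - x₁)) = c s := by
      simp only [hcdef, map_add, map_smul, map_sub]
    have hcsn : ‖c s‖ ^ 2 ≠ 0 := pow_ne_zero 2 (norm_ne_zero_iff.mpr hcs0)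
    refine ⟨?_, ne_of_gt h1, ne_of_lt h2⟩
    refine ⟨x₁ + (s : ℂ) • (x₂ - x₁), ?_, ?_⟩
    · rw [hden, hSxs]
      exact hcsn
    · have hx : (inner ℂ (B (c s)) (c s) : ℂ).re = r * ‖c s‖ ^ 2 := by
        have h4 := hgs
        simp only [hgdef] at h4
        linarith
      rw [hnum, hden, hSxs, hx, mul_div_assoc, div_self hcsn, mul_one]
end
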